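/- Let m be an odd positive integer and q a power of 2. A maximal 1-generator QC code C of index 2 in (F_q[x]/(x^m+1))^2 is μ_{−1}-LCD if and only if there exists a unique c(x) ∈ F_q[x]/(x^m+1) such that C = F_q[x]·(c(x), c(x)+1). Furthermore, the total number of μ_{−1}-LCD maximal 1-generator QC codes in (F_q[x]/(x^m+1))^2 is q^m. -/

import Mathlib

open scoped BigOperators
open Polynomial

/-- The Euclidean dual of a linear code inside `(F[x]/(x^m - 1))^l`, each factor being
identified with `F^m` (coordinates indexed by `ZMod m`) via coefficient vectors. -/
def qcDual {F : Type*} [Field F] {l m : ℕ} [NeZero m]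
    (C : Submodule F (Fin l → ZMod m → F)) : Submodule F (Fin l → ZMod m → F) where
  carrier := {b | ∀ c ∈ C, ∑ j, ∑ i, b j i * c j i = 0}
  zero_mem' := by intro c hc; simp
  add_mem' := by
    intro x y hx hy c hc
    simp only [Set.mem_setOf_eq, Pi.add_apply, add_mul, Finset.sum_add_distrib,
      hx c hc, hy c hc, add_zero]
  smul_mem' := by
    intro r x hx c hc
    simp only [Set.mem_setOf_eq, Pi.smul_apply, smul_eq_mul, mul_assoc,
      ← Finset.mul_sum, hx c hc, mul_zero]

/-- The coordinate permutation `μ_a` of `(F[x]/(x^m - 1))^l`, sending each component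
`c_j(x)` to `c_j(x^a) mod (x^m - 1)`; on coefficient vectors the coefficient of `x^i`
of the image of `c_j` is the coefficient of `x^(a⁻¹ i)` of `c_j`. -/
def muQC {F : Type*} [Field F] (l m : ℕ) (a : ℤ) :
    (Fin l → ZMod m → F) →ₗ[F] (Fin l → ZMod m → F) where
  toFun c := fun j i => c j (((a : ZMod m))⁻¹ * i)
  map_add' := fun _ _ => rfl
  map_smul' := fun _ _ => rfl

/-- The coefficient vector (indexed by `ZMod m`) of a polynomial of degree `< m`,
identifying `F[x]/(x^m - 1)` with `F^m`. -/
def polyToVec {F : Type*} [Field F] (m : ℕ) [NeZero m] (p : Polynomial F) : ZMod m → F :=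
  fun i => p.coeff i.val

/-- The 1-generator quasi-cyclic code of index `2` generated by
`(c₁(x), c₂(x)) ∈ (F[x]/(x^m + 1))^2` (here `q` is even, so `x^m + 1 = x^m - 1`). -/
def oneGenQC2 {F : Type*} [Field F] (m : ℕ) [NeZero m] (c₁ c₂ : Polynomial F) :
    Submodule F (Fin 2 → ZMod m → F) :=
  Submodule.span F
    {v | ∃ p : Polynomial F,
      v = ![polyToVec m ((p * c₁) % (X ^ m + 1)), polyToVec m ((p * c₂) % (X ^ m + 1))]}

namespace QCP

open AdjoinRoot

set_option linter.unusedSectionVars false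

variable {F : Type*} [Field F] {m : ℕ} [NeZero m] {f : F[X]}

lemma charF2 [Fintype F] (hq : ∃ s : ℕ, Fintype.card F = 2 ^ s) : CharP F 2 := by
  obtain ⟨s, hs⟩ := hq
  obtain ⟨p, hp⟩ := CharP.exists F
  haveI := hp
  obtain ⟨n, hprime, hcard⟩ := FiniteField.card F p
  have hp2 : p = 2 := by
    have hdvd : p ∣ 2 ^ s := by
      rw [← hs, hcard]
      exact dvd_pow_self p (Nat.pos_iff_ne_zero.mp n.pos)
    exact (Nat.prime_dvd_prime_iff_eq hprime Nat.prime_two).mp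
      (hprime.dvd_of_dvd_pow hdvd)
  rwa [hp2] at hp

noncomputable def phi (hf : f.Monic) : AdjoinRoot f →ₗ[F] (ZMod m → F) where
  toFun z := fun i => (AdjoinRoot.modByMonicHom hf z).coeff i.val
  map_add' z w := by funext i; simp
  map_smul' a z := by funext i; simp

lemma phi_mk (hf : f.Monic) (p : F[X]) :
    phi (m := m) hf (mk f p) = fun i => (p %ₘ f).coeff i.val := by
  funext i; simp [phi, modByMonicHom_mk]

lemma degree_eq (hf : f.Monic) (hdm : f.natDegree = m) : f.degree = (m : WithBot ℕ) := by
  rw [degree_eq_natDegree hf.ne_zero, hdm]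

lemma degree_modByMonicHom_lt (hf : f.Monic) (z : AdjoinRoot f) :
    (modByMonicHom hf z).degree < f.degree := by
  obtain ⟨p, rfl⟩ := mk_surjective z
  rw [modByMonicHom_mk]
  exact degree_modByMonic_lt p hf

lemma phi_injective (hf : f.Monic) (hdm : f.natDegree = m) :
    Function.Injective (phi (m := m) hf) := by
  have hfdeg : f.degree = (m : WithBot ℕ) := degree_eq hf hdm
  intro z w h
  have hrep : modByMonicHom hf z = modByMonicHom hf w := by
    ext k
    by_cases hk : k < m
    · have := congrFun h (k : ZMod m)
      simpa [phi, ZMod.val_cast_of_lt hk] using this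
    · push_neg at hk
      rw [coeff_eq_zero_of_degree_lt, coeff_eq_zero_of_degree_lt]
      · exact lt_of_lt_of_le ((degree_modByMonicHom_lt hf w).trans_le hfdeg.le)
          (by exact_mod_cast hk)
      · exact lt_of_lt_of_le ((degree_modByMonicHom_lt hf z).trans_le hfdeg.le)
          (by exact_mod_cast hk)
  calc z = mk f (modByMonicHom hf z) := (mk_leftInverse hf z).symm
    _ = mk f (modByMonicHom hf w) := by rw [hrep]
    _ = w := mk_leftInverse hf w

lemma phi_bijective (hf : f.Monic) (hdm : f.natDegree = m) :
    Function.Bijective (phi (m := m) hf) := by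
  have h1 : FiniteDimensional F (AdjoinRoot f) :=
    Module.Finite.of_basis (AdjoinRoot.powerBasis' hf).basis
  have hrank : Module.finrank F (AdjoinRoot f) = Module.finrank F (ZMod m → F) := by
    rw [Module.finrank_pi, ZMod.card, PowerBasis.finrank (powerBasis' hf)]
    exact hdm
  exact ⟨phi_injective hf hdm,
    (LinearMap.injective_iff_surjective_of_finrank_eq_finrank hrank).mp
      (phi_injective hf hdm)⟩

noncomputable def phiE (hf : f.Monic) (hdm : f.natDegree = m) :
    AdjoinRoot f ≃ₗ[F] (ZMod m → F) :=
  LinearEquiv.ofBijective _ (phi_bijective hf hdm)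

lemma phiE_apply (hf : f.Monic) (hdm : f.natDegree = m) (z : AdjoinRoot f) :
    phiE hf hdm z = phi hf z := rfl

noncomputable def Psi (hf : f.Monic) (hdm : f.natDegree = m) :
    (AdjoinRoot f × AdjoinRoot f) ≃ₗ[F] (Fin 2 → ZMod m → F) :=
  ((phiE hf hdm).prodCongr (phiE hf hdm)).trans (LinearEquiv.finTwoArrow F (ZMod m → F)).symm

lemma Psi_apply (hf : f.Monic) (hdm : f.natDegree = m) (z w : AdjoinRoot f) :
    Psi hf hdm (z, w) = ![phi hf z, phi hf w] := by
  funext j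
  fin_cases j <;>
    simp [Psi, phiE, LinearEquiv.finTwoArrow, finTwoArrowEquiv, LinearEquiv.piFinTwo]

lemma phi_root_pow (hf : f.Monic) (hdm : f.natDegree = m) {a : ℕ} (ha : a < m) :
    phi (m := m) hf (root f ^ a) = fun i => if i.val = a then (1 : F) else 0 := by
  have h0 : root f ^ a = mk f (X ^ a) := by rw [map_pow, mk_X]
  rw [h0, phi_mk]
  have hself : (X ^ a : F[X]) %ₘ f = X ^ a := by
    rw [modByMonic_eq_self_iff hf, degree_X_pow, degree_eq hf hdm]
    exact_mod_cast ha
  funext i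
  rw [hself, coeff_X_pow]

lemma coeff_modX (hf : f.Monic) (hdm : f.natDegree = m)
    (hfeq : f = X ^ m + 1) (hchar : CharP F 2) {a b : ℕ} (ha : a < m) (hb : b < m) :
    ((X ^ (a + b) : F[X]) %ₘ f).coeff 0 = if (-(a : ZMod m)).val = b then (1 : F) else 0 := by
  have hm0 : 0 < m := Nat.pos_of_ne_zero (NeZero.ne m)
  have hcond : (-(a : ZMod m)).val = b ↔ (a + b = 0 ∨ a + b = m) := by
    constructor
    · intro h
      have h2 : ((a + b : ℕ) : ZMod m) = 0 := by
        push_cast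
        rw [← h, ZMod.natCast_zmod_val]
        ring
      rw [ZMod.natCast_eq_zero_iff] at h2
      obtain ⟨k, hk⟩ := h2
      have hk2 : k ≤ 1 := by
        by_contra hgt
        push_neg at hgt
        have : m * 2 ≤ m * k := Nat.mul_le_mul_left m hgt
        omega
      interval_cases k <;> omega
    · intro h
      have hd : ((a + b : ℕ) : ZMod m) = 0 := by
        rw [ZMod.natCast_eq_zero_iff]
        rcases h with h | h <;> simp [h]
      have hab : (b : ZMod m) + (a : ZMod m) = 0 := by
        push_cast at hd; linear_combination hd
      rw [neg_eq_of_add_eq_zero_left hab, ZMod.val_cast_of_lt hb]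
  have hmain : ((X ^ (a + b) : F[X]) %ₘ f).coeff 0
      = if a + b = 0 ∨ a + b = m then (1 : F) else 0 := by
    rcases Nat.eq_zero_or_pos (a + b) with h0 | hpos
    · rw [if_pos (Or.inl h0), h0, pow_zero, (modByMonic_eq_self_iff hf).mpr, coeff_one_zero]
      rw [degree_one, degree_eq hf hdm]
      exact_mod_cast hm0
    · rcases Nat.lt_trichotomy (a + b) m with hlt | heq | hgt
      · rw [if_neg (by omega), (modByMonic_eq_self_iff hf).mpr, coeff_X_pow, if_neg (by omega)]
        rw [degree_X_pow, degree_eq hf hdm]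
        exact_mod_cast hlt
      · rw [heq, if_pos (Or.inr rfl)]
        have hx : (X ^ m : F[X]) = f - 1 := by rw [hfeq]; ring
        rw [hx, sub_modByMonic, (modByMonic_eq_zero_iff_dvd hf).mpr dvd_rfl,
          (modByMonic_eq_self_iff hf).mpr, zero_sub, coeff_neg, coeff_one_zero, CharTwo.neg_eq]
        rw [degree_one, degree_eq hf hdm]
        exact_mod_cast hm0
      · rw [if_neg (by omega)]
        set k := a + b - m with hkdef
        have hk : a + b = k + m := by omega
        have hkm : k < m := by omega
        have hk0 : 0 < k := by omega
        have hx : (X ^ (a + b) : F[X]) = X ^ k * f - X ^ k := by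
          rw [hfeq, hk]; ring
        rw [hx, sub_modByMonic, (modByMonic_eq_zero_iff_dvd hf).mpr (dvd_mul_left f _),
          (modByMonic_eq_self_iff hf).mpr, zero_sub, coeff_neg, coeff_X_pow,
          if_neg (by omega), neg_zero]
        rw [degree_X_pow, degree_eq hf hdm]
        exact_mod_cast hkm
  rw [hmain]
  by_cases h : (-(a : ZMod m)).val = b
  · rw [if_pos h, if_pos (hcond.mp h)]
  · rw [if_neg h, if_neg (fun hc => h (hcond.mpr hc))]

lemma star (hf : f.Monic) (hdm : f.natDegree = m) (hfeq : f = X ^ m + 1)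
    (hchar : CharP F 2) (z w : AdjoinRoot f) :
    ∑ i : ZMod m, phi hf z i * phi hf w (-i) = phi (m := m) hf (z * w) 0 := by
  let B1 : AdjoinRoot f →ₗ[F] AdjoinRoot f →ₗ[F] F := LinearMap.mk₂ F
    (fun z w => ∑ i : ZMod m, phi hf z i * phi hf w (-i))
    (by intro z z' w; simp [add_mul, Finset.sum_add_distrib])
    (by intro c z w; simp [Finset.mul_sum, mul_assoc])
    (by intro z w w'; simp [mul_add, Finset.sum_add_distrib])
    (by intro c z w; simp only [map_smul, Pi.smul_apply, smul_eq_mul, Finset.mul_sum]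
        exact Finset.sum_congr rfl fun i _ => by ring)
  let B2 : AdjoinRoot f →ₗ[F] AdjoinRoot f →ₗ[F] F := LinearMap.mk₂ F
    (fun z w => phi (m := m) hf (z * w) 0)
    (by intro z z' w; simp [add_mul])
    (by intro c z w; simp [smul_mul_assoc])
    (by intro z w w'; simp [mul_add])
    (by intro c z w; simp [mul_smul_comm])
  have hbasis : B1 = B2 := by
    apply (AdjoinRoot.powerBasis' hf).basis.ext
    intro i
    apply (AdjoinRoot.powerBasis' hf).basis.ext
    intro j
    have hcb : ⇑(AdjoinRoot.powerBasis' hf).basis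
        = fun i : Fin ((AdjoinRoot.powerBasis' hf).dim) => root f ^ (i : ℕ) :=
      (AdjoinRoot.powerBasis' hf).coe_basis
    rw [hcb]
    have hdim : (AdjoinRoot.powerBasis' hf).dim = f.natDegree := rfl
    have ha : ((i : ℕ)) < m := by rw [← hdm, ← hdim]; exact i.isLt
    have hb : ((j : ℕ)) < m := by rw [← hdm, ← hdim]; exact j.isLt
    show ∑ i' : ZMod m, phi hf (root f ^ (i : ℕ)) i' * phi hf (root f ^ (j : ℕ)) (-i')
        = phi (m := m) hf (root f ^ (i : ℕ) * root f ^ (j : ℕ)) 0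
    rw [phi_root_pow hf hdm ha, phi_root_pow hf hdm hb]
    have hsum : (∑ i' : ZMod m, (if i'.val = (i : ℕ) then (1:F) else 0)
          * (if (-i').val = (j : ℕ) then (1:F) else 0))
        = (if (((i : ℕ) : ZMod m)).val = (i : ℕ) then (1:F) else 0)
          * (if (-(((i : ℕ)) : ZMod m)).val = (j : ℕ) then (1:F) else 0) := by
      apply Finset.sum_eq_single
      · intro i' _ hne
        have hv : ¬ i'.val = (i : ℕ) := fun hh => hne (by rw [← hh, ZMod.natCast_zmod_val])
        rw [if_neg hv, zero_mul]
      · intro habs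
        exact absurd (Finset.mem_univ _) habs
    rw [hsum, ZMod.val_cast_of_lt ha, if_pos rfl, one_mul]
    have hprod : root f ^ (i : ℕ) * root f ^ (j : ℕ) = mk f (X ^ ((i : ℕ) + (j : ℕ))) := by
      rw [map_pow, mk_X, pow_add]
    rw [hprod]
    simp only [phi_mk]
    rw [ZMod.val_zero, coeff_modX hf hdm hfeq hchar ha hb]
  have := LinearMap.congr_fun (LinearMap.congr_fun hbasis z) w
  simpa [B1, B2] using this

lemma zmod_neg_one_inv : (((-1 : ℤ) : ZMod m))⁻¹ = (-1 : ZMod m) := by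
  have h1 : ((-1 : ℤ) : ZMod m) = (-1 : ZMod m) := by push_cast; ring
  rw [h1]
  have hu : IsUnit (-1 : ZMod m) := IsUnit.neg isUnit_one
  have h2 : (-1 : ZMod m) * (-1) = 1 := by ring
  calc (-1 : ZMod m)⁻¹ = (-1 : ZMod m)⁻¹ * ((-1) * (-1)) := by rw [h2, mul_one]
    _ = ((-1 : ZMod m)⁻¹ * (-1)) * (-1) := by ring
    _ = -1 := by rw [ZMod.inv_mul_of_unit _ hu, one_mul]

lemma muQC_apply (v : Fin 2 → ZMod m → F) (j : Fin 2) (i : ZMod m) :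
    muQC 2 m (-1) v j i = v j (-i) := by
  show v j ((((-1 : ℤ) : ZMod m))⁻¹ * i) = v j (-i)
  rw [zmod_neg_one_inv, neg_one_mul]

noncomputable def ell (γ₁ γ₂ : AdjoinRoot f) : AdjoinRoot f →ₗ[F] AdjoinRoot f × AdjoinRoot f where
  toFun z := (z * γ₁, z * γ₂)
  map_add' := by intros; simp [add_mul]
  map_smul' := by intros; simp [smul_mul_assoc]

noncomputable def Cmod (γ₁ γ₂ : AdjoinRoot f) : Submodule F (AdjoinRoot f × AdjoinRoot f) :=
  LinearMap.range (ell γ₁ γ₂)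

lemma mem_Cmod {γ₁ γ₂ a b : AdjoinRoot f} :
    (a, b) ∈ Cmod (F := F) γ₁ γ₂ ↔ ∃ z, z * γ₁ = a ∧ z * γ₂ = b := by
  constructor
  · rintro ⟨z, hz⟩
    exact ⟨z, congrArg Prod.fst hz, congrArg Prod.snd hz⟩
  · rintro ⟨z, h1, h2⟩
    exact ⟨z, Prod.ext h1 h2⟩

lemma polyToVec_mod (hf : f.Monic) (hfeq : f = X ^ m + 1) (h : F[X]) :
    polyToVec m (h % (X ^ m + 1)) = phi (m := m) hf (mk f h) := by
  funext i
  show (h % (X ^ m + 1)).coeff i.val = (modByMonicHom hf (mk f h)).coeff i.val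
  rw [modByMonicHom_mk, hfeq, modByMonic_eq_mod _ (hfeq ▸ hf)]

lemma polyToVec_mod_mul (hf : f.Monic) (hfeq : f = X ^ m + 1) (p c : F[X]) :
    polyToVec m ((p * c) % (X ^ m + 1)) = phi (m := m) hf (mk f p * mk f c) := by
  rw [polyToVec_mod hf hfeq (p * c)]
  exact congrArg _ (map_mul _ _ _)

lemma code_eq (hf : f.Monic) (hdm : f.natDegree = m) (hfeq : f = X ^ m + 1) (c₁ c₂ : F[X]) :
    oneGenQC2 m c₁ c₂ = (Cmod (mk f c₁) (mk f c₂)).map (Psi hf hdm).toLinearMap := by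
  rw [oneGenQC2]
  have hset : {v | ∃ p : F[X],
        v = ![polyToVec m ((p * c₁) % (X ^ m + 1)), polyToVec m ((p * c₂) % (X ^ m + 1))]}
      = ⇑((Psi hf hdm).toLinearMap) '' (Cmod (mk f c₁) (mk f c₂) : Set (AdjoinRoot f × AdjoinRoot f)) := by
    ext v
    constructor
    · rintro ⟨p, rfl⟩
      refine ⟨(mk f p * mk f c₁, mk f p * mk f c₂), ⟨mk f p, rfl⟩, ?_⟩
      show Psi hf hdm (mk f p * mk f c₁, mk f p * mk f c₂) = _
      rw [Psi_apply, polyToVec_mod_mul hf hfeq p c₁, polyToVec_mod_mul hf hfeq p c₂]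
    · rintro ⟨x, hx, rfl⟩
      obtain ⟨z, rfl⟩ := hx
      obtain ⟨p, rfl⟩ := mk_surjective z
      refine ⟨p, ?_⟩
      show Psi hf hdm (mk f p * mk f c₁, mk f p * mk f c₂) = _
      rw [Psi_apply, polyToVec_mod_mul hf hfeq p c₁, polyToVec_mod_mul hf hfeq p c₂]
  rw [hset, Submodule.span_image, Submodule.span_eq]

lemma pairing_eval (hf : f.Monic) (hdm : f.natDegree = m) (hfeq : f = X ^ m + 1)
    (hchar : CharP F 2) (a₁ a₂ b₁ b₂ : AdjoinRoot f) :
    ∑ j : Fin 2, ∑ i : ZMod m,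
        (Psi hf hdm (a₁, a₂)) j i * (muQC 2 m (-1) (Psi hf hdm (b₁, b₂))) j i
      = phi (m := m) hf (a₁ * b₁ + a₂ * b₂) 0 := by
  simp only [muQC_apply, Psi_apply]
  rw [Fin.sum_univ_two]
  simp only [Matrix.cons_val_zero, Matrix.cons_val_one, Matrix.head_cons]
  rw [star hf hdm hfeq hchar, star hf hdm hfeq hchar, ← Pi.add_apply, ← map_add]

lemma nondeg (hf : f.Monic) (hdm : f.natDegree = m) (hfeq : f = X ^ m + 1)
    (hchar : CharP F 2) {u : AdjoinRoot f}
    (h : ∀ w, phi (m := m) hf (w * u) 0 = 0) : u = 0 := by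
  apply phi_injective hf hdm
  rw [map_zero]
  funext j
  set w := (phiE hf hdm).symm (Pi.single (-j) (1 : F)) with hw
  have hphiw : phi hf w = Pi.single (-j) (1 : F) := (phiE hf hdm).apply_symm_apply _
  have hstar := star hf hdm hfeq hchar u w
  rw [hphiw] at hstar
  have hsum : ∑ i : ZMod m, phi hf u i * (Pi.single (-j) (1 : F) : ZMod m → F) (-i) = phi hf u j := by
    rw [Finset.sum_eq_single j]
    · rw [Pi.single_apply, if_pos rfl, mul_one]
    · intro i _ hne
      rw [Pi.single_apply, if_neg (fun hh => hne (neg_inj.mp hh)), mul_zero]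
    · intro habs
      exact absurd (Finset.mem_univ _) habs
  rw [hsum] at hstar
  rw [hstar, mul_comm, h w]
  rfl

lemma mem_qcDual {l : ℕ} {C : Submodule F (Fin l → ZMod m → F)} {b : Fin l → ZMod m → F} :
    b ∈ qcDual C ↔ ∀ c ∈ C, ∑ j, ∑ i, b j i * c j i = 0 := Iff.rfl

lemma mem_dual_iff (hf : f.Monic) (hdm : f.natDegree = m) (hfeq : f = X ^ m + 1)
    (hchar : CharP F 2) (γ₁ γ₂ a₁ a₂ : AdjoinRoot f) :
    Psi hf hdm (a₁, a₂) ∈ qcDual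
        (((Cmod γ₁ γ₂).map (Psi hf hdm).toLinearMap).map (muQC 2 m (-1)))
      ↔ a₁ * γ₁ + a₂ * γ₂ = 0 := by
  rw [mem_qcDual]
  constructor
  · intro h
    apply nondeg hf hdm hfeq hchar
    intro w
    have hc : (muQC 2 m (-1)) (Psi hf hdm (w * γ₁, w * γ₂))
        ∈ ((Cmod γ₁ γ₂).map (Psi hf hdm).toLinearMap).map (muQC 2 m (-1)) :=
      Submodule.mem_map_of_mem (Submodule.mem_map_of_mem ⟨w, rfl⟩)
    have h2 := h _ hc
    rw [pairing_eval hf hdm hfeq hchar] at h2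
    have heq : a₁ * (w * γ₁) + a₂ * (w * γ₂) = w * (a₁ * γ₁ + a₂ * γ₂) := by ring
    rwa [heq] at h2
  · intro h c hc
    rw [Submodule.mem_map] at hc
    obtain ⟨y, hy, rfl⟩ := hc
    rw [Submodule.mem_map] at hy
    obtain ⟨x, hx, rfl⟩ := hy
    obtain ⟨z, rfl⟩ := hx
    show ∑ j : Fin 2, ∑ i : ZMod m, (Psi hf hdm (a₁, a₂)) j i
        * (muQC 2 m (-1) (Psi hf hdm (z * γ₁, z * γ₂))) j i = 0
    rw [pairing_eval hf hdm hfeq hchar]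
    have heq : a₁ * (z * γ₁) + a₂ * (z * γ₂) = z * (a₁ * γ₁ + a₂ * γ₂) := by ring
    rw [heq, h, mul_zero, map_zero]
    rfl

lemma finite_adjoinRoot [Fintype F] (hf : f.Monic) : Finite (AdjoinRoot f) := by
  have b := (AdjoinRoot.powerBasis' hf).basis
  exact Finite.of_equiv _ b.equivFun.symm.toEquiv

lemma nontrivial_adjoinRoot (hf : f.Monic) (hdm : f.natDegree = m) :
    Nontrivial (AdjoinRoot f) := by
  apply AdjoinRoot.nontrivial
  rw [degree_eq hf hdm]
  have hm0 : 0 < m := Nat.pos_of_ne_zero (NeZero.ne m)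
  exact_mod_cast hm0.ne'

lemma charR2 (hf : f.Monic) (hdm : f.natDegree = m) (hchar : CharP F 2) :
    CharP (AdjoinRoot f) 2 := by
  haveI := nontrivial_adjoinRoot hf hdm
  exact charP_of_injective_algebraMap (algebraMap F (AdjoinRoot f)).injective 2

lemma sq_zero (hm : Odd m) (hchar : CharP F 2) (hf : f.Monic) (hfeq : f = X ^ m + 1)
    {z : AdjoinRoot f} (h : z * z = 0) : z = 0 := by
  obtain ⟨p, rfl⟩ := mk_surjective z
  rw [← map_mul, mk_eq_zero] at h
  rw [mk_eq_zero]
  have hsep : f.Separable := by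
    have h1 : (X ^ m + 1 : F[X]) = X ^ m - C 1 := by
      rw [sub_eq_add_neg, ← C_neg, CharTwo.neg_eq, C_1]
    have hmne : (m : F) ≠ 0 := by
      intro hc
      have h2 : (2 : ℕ) ∣ m := (CharP.cast_eq_zero_iff F 2 m).mp hc
      obtain ⟨k, hk⟩ := hm
      omega
    rw [hfeq, h1]
    exact separable_X_pow_sub_C 1 hmne one_ne_zero
  have hsq : Squarefree f := hsep.squarefree
  have hrad := hsq.isRadical
  exact hrad 2 p (by rwa [sq])

lemma lcd_iff_unit [Fintype F] (hm : Odd m) (hchar : CharP F 2) (hf : f.Monic)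
    (hdm : f.natDegree = m) (hfeq : f = X ^ m + 1) (c₁ c₂ : F[X])
    (hbez : ∃ δ₁ δ₂ : AdjoinRoot f, δ₁ * mk f c₁ + δ₂ * mk f c₂ = 1) :
    oneGenQC2 m c₁ c₂ ⊓ qcDual ((oneGenQC2 m c₁ c₂).map (muQC 2 m (-1))) = ⊥
      ↔ IsUnit (mk f c₁ + mk f c₂) := by
  haveI hR2 : CharP (AdjoinRoot f) 2 := charR2 hf hdm hchar
  set γ₁ := mk f c₁ with hγ₁
  set γ₂ := mk f c₂ with hγ₂
  have hcode := code_eq hf hdm hfeq c₁ c₂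
  have hexpand : ∀ z : AdjoinRoot f,
      (z * γ₁) * γ₁ + (z * γ₂) * γ₂ = (z * (γ₁ + γ₂)) * (γ₁ + γ₂) := by
    intro z
    have h2 : z * (γ₁ * γ₂) + z * (γ₁ * γ₂) = 0 := CharTwo.add_self_eq_zero _
    calc (z * γ₁) * γ₁ + (z * γ₂) * γ₂
        = (z * γ₁) * γ₁ + (z * γ₂) * γ₂ + (z * (γ₁ * γ₂) + z * (γ₁ * γ₂)) := by
          rw [h2, add_zero]
      _ = (z * (γ₁ + γ₂)) * (γ₁ + γ₂) := by ring
  constructor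
  · intro h
    have hinj : ∀ z : AdjoinRoot f, z * (γ₁ + γ₂) = 0 → z = 0 := by
      intro z hz
      have hmem : Psi hf hdm (z * γ₁, z * γ₂)
          ∈ oneGenQC2 m c₁ c₂ ⊓ qcDual ((oneGenQC2 m c₁ c₂).map (muQC 2 m (-1))) := by
        rw [Submodule.mem_inf]
        constructor
        · rw [hcode]
          exact Submodule.mem_map_of_mem ⟨z, rfl⟩
        · rw [hcode]
          rw [mem_dual_iff hf hdm hfeq hchar]
          rw [hexpand z, hz, zero_mul]
      rw [h, Submodule.mem_bot] at hmem
      have hpair : (z * γ₁, z * γ₂) = 0 := (Psi hf hdm).map_eq_zero_iff.mp hmem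
      have hz1 : z * γ₁ = 0 := congrArg Prod.fst hpair
      have hz2 : z * γ₂ = 0 := congrArg Prod.snd hpair
      obtain ⟨δ₁, δ₂, hδ⟩ := hbez
      calc z = z * (δ₁ * γ₁ + δ₂ * γ₂) := by rw [hδ, mul_one]
        _ = δ₁ * (z * γ₁) + δ₂ * (z * γ₂) := by ring
        _ = 0 := by rw [hz1, hz2, mul_zero, mul_zero, add_zero]
    haveI : Finite (AdjoinRoot f) := finite_adjoinRoot hf
    have hsurj : Function.Surjective (fun z : AdjoinRoot f => z * (γ₁ + γ₂)) := by
      apply Finite.injective_iff_surjective.mp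
      intro a b hab
      have : (a - b) * (γ₁ + γ₂) = 0 := by
        simp only at hab
        rw [sub_mul, hab, sub_self]
      have := hinj _ this
      exact sub_eq_zero.mp this
    obtain ⟨z, hz⟩ := hsurj 1
    exact IsUnit.of_mul_eq_one z (by rw [mul_comm]; exact hz)
  · intro hu
    rw [eq_bot_iff]
    rintro v hv
    rw [Submodule.mem_inf] at hv
    obtain ⟨hv1, hv2⟩ := hv
    rw [hcode] at hv1 hv2
    rw [Submodule.mem_map] at hv1
    obtain ⟨x, hx, rfl⟩ := hv1
    obtain ⟨z, rfl⟩ := hx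
    have hv2' : (z * γ₁) * γ₁ + (z * γ₂) * γ₂ = 0 :=
      (mem_dual_iff hf hdm hfeq hchar γ₁ γ₂ (z * γ₁) (z * γ₂)).mp hv2
    rw [hexpand z] at hv2'
    have hww : (z * (γ₁ + γ₂)) * (z * (γ₁ + γ₂)) = 0 := by
      calc (z * (γ₁ + γ₂)) * (z * (γ₁ + γ₂)) = z * ((z * (γ₁ + γ₂)) * (γ₁ + γ₂)) := by ring
        _ = 0 := by rw [hv2', mul_zero]
    have hzg : z * (γ₁ + γ₂) = 0 := sq_zero hm hchar hf hfeq hww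
    obtain ⟨U, hU⟩ := hu
    have hz0 : z = 0 := by
      calc z = z * ((γ₁ + γ₂) * ↑U⁻¹) := by
            rw [← hU, Units.mul_inv, mul_one]
        _ = (z * (γ₁ + γ₂)) * ↑U⁻¹ := by ring
        _ = 0 := by rw [hzg, zero_mul]
    rw [Submodule.mem_bot]
    show Psi hf hdm (z * γ₁, z * γ₂) = 0
    rw [hz0, zero_mul, zero_mul]
    exact map_zero _

lemma Cmod_unit_smul {u γ₁ γ₂ : AdjoinRoot f} (hu : IsUnit u) :
    Cmod (F := F) (u * γ₁) (u * γ₂) = Cmod γ₁ γ₂ := by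
  obtain ⟨U, rfl⟩ := hu
  ext ⟨a, b⟩
  rw [mem_Cmod, mem_Cmod]
  constructor
  · rintro ⟨z, h1, h2⟩
    exact ⟨z * ↑U, by rw [← h1]; ring, by rw [← h2]; ring⟩
  · rintro ⟨z, h1, h2⟩
    refine ⟨z * ↑U⁻¹, ?_, ?_⟩
    · rw [← h1]
      have : (↑U⁻¹ : AdjoinRoot f) * ↑U = 1 := U.inv_mul
      calc z * ↑U⁻¹ * (↑U * γ₁) = z * γ₁ * (↑U⁻¹ * ↑U) := by ring
        _ = z * γ₁ := by rw [this, mul_one]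
    · rw [← h2]
      have : (↑U⁻¹ : AdjoinRoot f) * ↑U = 1 := U.inv_mul
      calc z * ↑U⁻¹ * (↑U * γ₂) = z * γ₂ * (↑U⁻¹ * ↑U) := by ring
        _ = z * γ₂ := by rw [this, mul_one]

lemma code_inj (hf : f.Monic) (hdm : f.natDegree = m) (hfeq : f = X ^ m + 1)
    {c c' : F[X]} (hc : c.degree < (m : WithBot ℕ)) (hc' : c'.degree < (m : WithBot ℕ))
    (h : oneGenQC2 m c (c + 1) = oneGenQC2 m c' (c' + 1)) : c = c' := by
  rw [code_eq hf hdm hfeq, code_eq hf hdm hfeq] at h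
  have hC := Submodule.map_injective_of_injective
    ((Psi hf hdm).injective) h
  simp only [map_add, map_one] at hC
  have hmem : (mk f c', mk f c' + 1) ∈ Cmod (F := F) (mk f c) (mk f c + 1) := by
    rw [hC]
    exact mem_Cmod.mpr ⟨1, one_mul _, one_mul _⟩
  obtain ⟨z, hz1, hz2⟩ := mem_Cmod.mp hmem
  have hz : z = 1 := by
    rw [mul_add, mul_one, hz1] at hz2
    exact add_left_cancel hz2
  rw [hz, one_mul] at hz1
  have hdvd := mk_eq_mk.mp hz1
  have hdegsub : (c - c').degree < f.degree := by
    rw [degree_eq hf hdm]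
    exact lt_of_le_of_lt (degree_sub_le c c') (max_lt hc hc')
  have h0 : c - c' = 0 := Polynomial.eq_zero_of_dvd_of_degree_lt hdvd hdegsub
  exact sub_eq_zero.mp h0

lemma unit_iff_exists_unique (hchar : CharP F 2) (hf : f.Monic)
    (hdm : f.natDegree = m) (hfeq : f = X ^ m + 1) (c₁ c₂ : F[X]) :
    IsUnit (mk f c₁ + mk f c₂)
      ↔ ∃! c : F[X], c.degree < (m : WithBot ℕ)
          ∧ oneGenQC2 m c₁ c₂ = oneGenQC2 m c (c + 1) := by
  haveI hR2 : CharP (AdjoinRoot f) 2 := charR2 hf hdm hchar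
  set γ₁ := mk f c₁ with hγ₁
  set γ₂ := mk f c₂ with hγ₂
  constructor
  · intro hu
    obtain ⟨U, hU⟩ := hu
    set c : F[X] := modByMonicHom hf (↑U⁻¹ * γ₁) with hcdef
    have hcdeg : c.degree < (m : WithBot ℕ) := by
      rw [← degree_eq hf hdm]
      exact degree_modByMonicHom_lt hf _
    have hmkc : mk f c = ↑U⁻¹ * γ₁ := mk_leftInverse hf _
    have huinv : IsUnit (↑U⁻¹ : AdjoinRoot f) := Units.isUnit _
    have hinvmul : (↑U⁻¹ : AdjoinRoot f) * (γ₁ + γ₂) = 1 := by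
      rw [← hU]; exact U.inv_mul
    have hcode : oneGenQC2 m c₁ c₂ = oneGenQC2 m c (c + 1) := by
      rw [code_eq hf hdm hfeq, code_eq hf hdm hfeq]
      apply congrArg
      rw [map_add, map_one, hmkc]
      have h2 : (↑U⁻¹ : AdjoinRoot f) * γ₁ + 1 = ↑U⁻¹ * γ₂ := by
        calc (↑U⁻¹ : AdjoinRoot f) * γ₁ + 1
            = ↑U⁻¹ * γ₁ + ↑U⁻¹ * (γ₁ + γ₂) := by rw [hinvmul]
          _ = ↑U⁻¹ * γ₂ + (↑U⁻¹ * γ₁ + ↑U⁻¹ * γ₁) := by ring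
          _ = ↑U⁻¹ * γ₂ := by rw [CharTwo.add_self_eq_zero, add_zero]
      rw [h2]
      exact (Cmod_unit_smul huinv).symm
    refine ⟨c, ⟨hcdeg, hcode⟩, ?_⟩
    rintro c' ⟨hcdeg', hcode'⟩
    exact code_inj hf hdm hfeq hcdeg' hcdeg (hcode'.symm.trans hcode)
  · rintro ⟨c, ⟨hcdeg, hcode⟩, -⟩
    rw [code_eq hf hdm hfeq, code_eq hf hdm hfeq] at hcode
    have hC := Submodule.map_injective_of_injective ((Psi hf hdm).injective) hcode
    simp only [map_add, map_one] at hC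
    set γ := mk f c with hγ
    have h1 : (γ₁, γ₂) ∈ Cmod (F := F) γ (γ + 1) := by
      rw [← hC]
      exact mem_Cmod.mpr ⟨1, one_mul _, one_mul _⟩
    obtain ⟨p, hp1, hp2⟩ := mem_Cmod.mp h1
    have hp : γ₁ + γ₂ = p := by
      calc γ₁ + γ₂ = p * γ + p * (γ + 1) := by rw [hp1, hp2]
        _ = (p * γ + p * γ) + p := by ring
        _ = p := by rw [CharTwo.add_self_eq_zero, zero_add]
    have h2 : (γ, γ + 1) ∈ Cmod (F := F) γ₁ γ₂ := by
      rw [hC]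
      exact mem_Cmod.mpr ⟨1, one_mul _, one_mul _⟩
    obtain ⟨z, hz1, hz2⟩ := mem_Cmod.mp h2
    have hz : (γ₁ + γ₂) * z = 1 := by
      calc (γ₁ + γ₂) * z = z * γ₁ + z * γ₂ := by ring
        _ = γ + (γ + 1) := by rw [hz1, hz2]
        _ = (γ + γ) + 1 := by ring
        _ = 1 := by rw [CharTwo.add_self_eq_zero, zero_add]
    exact IsUnit.of_mul_eq_one z hz

lemma bezout [DecidableEq F] (hfeq : f = X ^ m + 1) {c₁ c₂ : F[X]}
    (hgcd : gcd (gcd c₁ c₂) (X ^ m + 1 : F[X]) = 1) :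
    ∃ δ₁ δ₂ : AdjoinRoot f, δ₁ * mk f c₁ + δ₂ * mk f c₂ = 1 := by
  have hco : IsCoprime (gcd c₁ c₂) (X ^ m + 1 : F[X]) :=
    (gcd_isUnit_iff _ _).mp (by rw [hgcd]; exact isUnit_one)
  obtain ⟨u, v, huv⟩ := hco
  obtain ⟨x, y, hxy⟩ := exists_gcd_eq_mul_add_mul c₁ c₂
  refine ⟨mk f (u * x), mk f (u * y), ?_⟩
  have hone : (u * x) * c₁ + (u * y) * c₂ + v * (X ^ m + 1) = 1 := by
    rw [hxy] at huv
    linear_combination huv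
  have hzero : mk f (X ^ m + 1 : F[X]) = 0 := by rw [← hfeq]; exact mk_self
  have hsplit : mk f (u * x) * mk f c₁ + mk f (u * y) * mk f c₂
      = mk f ((u * x) * c₁ + (u * y) * c₂) := by simp only [map_add, map_mul]
  rw [hsplit]
  have h2 : ((u * x) * c₁ + (u * y) * c₂ : F[X]) = 1 - v * (X ^ m + 1) := by
    linear_combination hone
  rw [h2, map_sub, map_mul, hzero, mul_zero, sub_zero, map_one]

lemma counting [Fintype F] [DecidableEq F] (hm : Odd m) (hchar : CharP F 2)
    (hf : (X ^ m + 1 : F[X]).Monic) (hdm : (X ^ m + 1 : F[X]).natDegree = m) :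
    Set.ncard {C : Submodule F (Fin 2 → ZMod m → F) |
        (∃ c₁ c₂ : F[X], gcd (gcd c₁ c₂) (X ^ m + 1) = 1 ∧ C = oneGenQC2 m c₁ c₂) ∧
        C ⊓ qcDual (C.map (muQC 2 m (-1))) = ⊥} = Fintype.card F ^ m := by
  haveI hR2 : CharP (AdjoinRoot (X ^ m + 1 : F[X])) 2 := charR2 hf hdm hchar
  have hset : {C : Submodule F (Fin 2 → ZMod m → F) |
        (∃ c₁ c₂ : F[X], gcd (gcd c₁ c₂) (X ^ m + 1) = 1 ∧ C = oneGenQC2 m c₁ c₂) ∧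
        C ⊓ qcDual (C.map (muQC 2 m (-1))) = ⊥}
      = (fun c : F[X] => oneGenQC2 m c (c + 1)) ''
          {c : F[X] | c.degree < (m : WithBot ℕ)} := by
    ext C
    simp only [Set.mem_setOf_eq, Set.mem_image]
    constructor
    · rintro ⟨⟨c₁, c₂, hgcd, rfl⟩, hlcd⟩
      have hbez := bezout rfl hgcd
      have hu := (lcd_iff_unit hm hchar hf hdm rfl c₁ c₂ hbez).mp hlcd
      obtain ⟨c, ⟨hdeg, hcode⟩, -⟩ := (unit_iff_exists_unique hchar hf hdm rfl c₁ c₂).mp hu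
      exact ⟨c, hdeg, hcode.symm⟩
    · rintro ⟨c, hdeg, rfl⟩
      have hcop : IsCoprime c (c + 1) := ⟨-1, 1, by ring⟩
      have hgcd1 : gcd c (c + 1) = 1 := by
        rw [← normalize_gcd]
        exact normalize_eq_one.mpr ((gcd_isUnit_iff _ _).mpr hcop)
      have hbez : ∃ δ₁ δ₂ : AdjoinRoot (X ^ m + 1 : F[X]),
          δ₁ * mk _ c + δ₂ * mk _ (c + 1) = 1 :=
        ⟨-1, 1, by rw [map_add, map_one]; ring⟩
      refine ⟨⟨c, c + 1, by rw [hgcd1, gcd_one_left], rfl⟩, ?_⟩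
      apply (lcd_iff_unit hm hchar hf hdm rfl c (c + 1) hbez).mpr
      rw [map_add, map_one]
      have h1 : mk (X ^ m + 1 : F[X]) c + (mk (X ^ m + 1 : F[X]) c + 1) = 1 := by
        rw [← add_assoc, CharTwo.add_self_eq_zero, zero_add]
      rw [h1]
      exact isUnit_one
  rw [hset]
  have hinj : Set.InjOn (fun c : F[X] => oneGenQC2 m c (c + 1))
      {c : F[X] | c.degree < (m : WithBot ℕ)} := by
    intro c hc c' hc' h
    exact code_inj hf hdm rfl hc hc' h
  rw [Set.ncard_image_of_injOn hinj]
  rw [← Nat.card_coe_set_eq]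
  have e1 : {c : F[X] | c.degree < (m : WithBot ℕ)} ≃ ↥(Polynomial.degreeLT F m) :=
    Equiv.subtypeEquivRight (fun c => (Polynomial.mem_degreeLT).symm)
  rw [Nat.card_congr e1, Nat.card_congr (Polynomial.degreeLTEquiv F m).toEquiv]
  rw [Nat.card_fun, Nat.card_eq_fintype_card, Nat.card_eq_fintype_card, Fintype.card_fin]

end QCP

/-- Let `m` be odd and `q` a power of `2`.  A maximal 1-generator QC code `C` of index
`2` in `(F_q[x]/(x^m + 1))^2` is `μ_{-1}`-LCD iff there is a unique
`c(x) ∈ F_q[x]/(x^m + 1)` (i.e. a unique polynomial of degree `< m`) with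
`C = F_q[x]·(c(x), c(x) + 1)`; moreover the total number of `μ_{-1}`-LCD maximal
1-generator QC codes in `(F_q[x]/(x^m + 1))^2` is `q^m`. -/
theorem maximal_oneGen_qc_index_two_mu_neg_one_lcd_iff
    {F : Type*} [Field F] [Fintype F] [DecidableEq F] {m : ℕ} [NeZero m]
    (hm : Odd m) (hq : ∃ s : ℕ, Fintype.card F = 2 ^ s) :
    (∀ c₁ c₂ : Polynomial F, gcd (gcd c₁ c₂) (X ^ m + 1) = 1 →
      (oneGenQC2 m c₁ c₂ ⊓ qcDual ((oneGenQC2 m c₁ c₂).map (muQC 2 m (-1))) = ⊥ ↔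
        ∃! c : Polynomial F, c.degree < (m : WithBot ℕ) ∧
          oneGenQC2 m c₁ c₂ = oneGenQC2 m c (c + 1))) ∧
    Set.ncard {C : Submodule F (Fin 2 → ZMod m → F) |
        (∃ c₁ c₂ : Polynomial F, gcd (gcd c₁ c₂) (X ^ m + 1) = 1 ∧
          C = oneGenQC2 m c₁ c₂) ∧
        C ⊓ qcDual (C.map (muQC 2 m (-1))) = ⊥} = Fintype.card F ^ m := by
  have hchar : CharP F 2 := QCP.charF2 hq
  have hm0 : m ≠ 0 := NeZero.ne m
  have hC1 : (X ^ m + 1 : F[X]) = X ^ m + C 1 := by rw [C_1]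
  have hf : (X ^ m + 1 : F[X]).Monic := by
    rw [hC1]; exact monic_X_pow_add_C 1 hm0
  have hdm : (X ^ m + 1 : F[X]).natDegree = m := by
    rw [hC1]; exact natDegree_X_pow_add_C
  constructor
  · intro c₁ c₂ hgcd
    have hbez := QCP.bezout rfl hgcd
    exact (QCP.lcd_iff_unit hm hchar hf hdm rfl c₁ c₂ hbez).trans
      (QCP.unit_iff_exists_unique hchar hf hdm rfl c₁ c₂)
  · exact QCP.counting hm hchar hf hdm
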